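/- In any profile V under 2-Approval with fixed tie-breaking, all Type 2 GS-manipulators have the same two top-ranked candidates in the same order; in particular, all Type 2 manipulators manipulate in favour of the same candidate (their common top candidate). -/

import Mathlib

def approvalScore {C : Type*} [Fintype C] [DecidableEq C] {n : ℕ} (k : ℕ)
    (V : Fin n → C → ℕ) (c : C) : ℕ :=
  (Finset.univ.filter fun i => V i c < k).card

def IsWinner {C : Type*} [Fintype C] [DecidableEq C] {n : ℕ} (k : ℕ)
    (V : Fin n → C → ℕ) (tb : C → ℕ) (w : C) : Prop :=
  ∀ c, c ≠ w → approvalScore k V c < approvalScore k V w ∨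
    (approvalScore k V c = approvalScore k V w ∧ tb w < tb c)

open scoped Classical in
noncomputable def winner {C : Type*} [Fintype C] [DecidableEq C] [Nonempty C] {n : ℕ} (k : ℕ)
    (V : Fin n → C → ℕ) (tb : C → ℕ) : C :=
  if h : ∃ w, IsWinner k V tb w then h.choose else Classical.arbitrary C

/-- Voter `i` is a Type 2 GS-manipulator at `V` (with winner `w`) under
2-Approval: he approves `w`, and he can make a candidate `x` that he approves
and strictly prefers to `w` win by a vote that removes `w` from his approved
set while keeping `x` approved. -/
def IsType2Manipulator {C : Type*} [Fintype C] [DecidableEq C] {n : ℕ}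
    (V : Fin n → C → ℕ) (tb : C → ℕ) (w : C) (i : Fin n) : Prop :=
  V i w < 2 ∧
  ∃ (v' : C → ℕ) (x : C), Function.Injective v' ∧
    V i x < 2 ∧ V i x < V i w ∧ ¬ (v' w < 2) ∧ v' x < 2 ∧
    IsWinner 2 (Function.update V i v') tb x

lemma scoreA {C : Type*} [Fintype C] [DecidableEq C] {n : ℕ}
    (V : Fin n → C → ℕ) (i : Fin n) (v' : C → ℕ) (c : C)
    (h1 : V i c < 2) (h2 : v' c < 2) :
    approvalScore 2 (Function.update V i v') c = approvalScore 2 V c := by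
  unfold approvalScore
  congr 1
  ext j
  by_cases hj : j = i <;> simp [hj, Function.update_apply, h1, h2] <;> omega

lemma scoreB {C : Type*} [Fintype C] [DecidableEq C] {n : ℕ}
    (V : Fin n → C → ℕ) (i : Fin n) (v' : C → ℕ) (c : C)
    (h1 : V i c < 2) (h2 : ¬ v' c < 2) :
    approvalScore 2 (Function.update V i v') c + 1 = approvalScore 2 V c := by
  unfold approvalScore
  have hset : (Finset.univ.filter fun j => Function.update V i v' j c < 2)
      = (Finset.univ.filter fun j => V j c < 2).erase i := by
    ext j
    by_cases hj : j = i <;> simp [hj, Function.update_apply, h1, h2] <;> omega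
  have hmem : i ∈ Finset.univ.filter fun j => V j c < 2 := by simp [h1] <;> omega
  rw [hset, Finset.card_erase_of_mem hmem]
  have := Finset.card_pos.mpr ⟨i, hmem⟩
  omega

lemma scoreC {C : Type*} [Fintype C] [DecidableEq C] {n : ℕ}
    (V : Fin n → C → ℕ) (i : Fin n) (v' : C → ℕ) (c : C)
    (h1 : ¬ V i c < 2) :
    approvalScore 2 V c ≤ approvalScore 2 (Function.update V i v') c := by
  apply Finset.card_le_card
  intro j hj
  simp only [Finset.mem_filter, Finset.mem_univ, true_and] at *
  have hj' : j ≠ i := by rintro rfl; exact h1 hj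
  rwa [Function.update_apply, if_neg hj']

lemma key {C : Type*} [Fintype C] [DecidableEq C] {n : ℕ}
    (V : Fin n → C → ℕ) (hV : ∀ i, Function.Injective (V i))
    (tb : C → ℕ) (w : C) (hw : IsWinner 2 V tb w)
    (i : Fin n) (hi : IsType2Manipulator V tb w i) :
    ∃ x, V i x = 0 ∧ V i w = 1 ∧
      ((approvalScore 2 V x + 1 = approvalScore 2 V w ∧ tb x < tb w) ∨
       (approvalScore 2 V x = approvalScore 2 V w ∧ tb w < tb x)) ∧
      (∀ c, ¬ V i c < 2 → c ≠ x →
        approvalScore 2 V c < approvalScore 2 V x ∨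
        (approvalScore 2 V c = approvalScore 2 V x ∧ tb x < tb c)) := by
  obtain ⟨hiw, v', x, hinj, hix, hixw, hvw, hvx, hwin⟩ := hi
  refine ⟨x, by omega, by omega, ?_, ?_⟩
  · have hxw : x ≠ w := fun h => by subst h; omega
    have hX : approvalScore 2 (Function.update V i v') x = approvalScore 2 V x :=
      scoreA V i v' x hix hvx
    have hW : approvalScore 2 (Function.update V i v') w + 1 = approvalScore 2 V w :=
      scoreB V i v' w hiw hvw
    have h1 := hw x hxw
    have h2 := hwin w (Ne.symm hxw)
    rcases h1 with h1 | ⟨h1, htb1⟩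
    · rcases h2 with h2 | ⟨h2, htb2⟩
      · omega
      · exact Or.inl ⟨by omega, htb2⟩
    · rcases h2 with h2 | ⟨h2, htb2⟩
      · exact Or.inr ⟨h1, htb1⟩
      · omega
  · intro c hc hcx
    have hX : approvalScore 2 (Function.update V i v') x = approvalScore 2 V x :=
      scoreA V i v' x hix hvx
    have hC : approvalScore 2 V c ≤ approvalScore 2 (Function.update V i v') c :=
      scoreC V i v' c hc
    rcases hwin c hcx with h | ⟨h, htb⟩
    · exact Or.inl (by omega)
    · have : approvalScore 2 V c ≤ approvalScore 2 V x := by omega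
      rcases lt_or_eq_of_le this with h' | h'
      · exact Or.inl h'
      · exact Or.inr ⟨h', htb⟩

/-- Under 2-Approval all Type 2 manipulators have the same two top-ranked
candidates, in the same order. -/
theorem stmt5 {C : Type*} [Fintype C] [DecidableEq C] {n : ℕ}
    (V : Fin n → C → ℕ) (hV : ∀ i, Function.Injective (V i))
    (tb : C → ℕ) (htb : Function.Injective tb)
    (w : C) (hw : IsWinner 2 V tb w)
    (i j : Fin n)
    (hi : IsType2Manipulator V tb w i)
    (hj : IsType2Manipulator V tb w j) :
    (∀ c, V i c = 0 ↔ V j c = 0) ∧ (∀ c, V i c = 1 ↔ V j c = 1) := by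
  obtain ⟨x, hix, hiw, Dx, Kx⟩ := key V hV tb w hw i hi
  obtain ⟨y, hjy, hjw, Dy, Ky⟩ := key V hV tb w hw j hj
  have hxw : x ≠ w := fun h => by rw [h] at hix; omega
  have hyw : y ≠ w := fun h => by rw [h] at hjy; omega
  -- main claim : x = y
  have hxy : x = y := by
    by_cases h1 : V i y < 2
    · -- y approved by i, so y = x or y = w
      have : V i y = 0 ∨ V i y = 1 := by omega
      rcases this with h | h
      · exact (hV i (by rw [h, hix])).symm
      · exact absurd (hV i (by rw [h, hiw])) hyw
    · by_cases h2 : V j x < 2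
      · have : V j x = 0 ∨ V j x = 1 := by omega
        rcases this with h | h
        · exact hV j (by rw [h, hjy])
        · exact absurd (hV j (by rw [h, hjw])) hxw
      · -- neither approves the other's favourite; derive contradiction
        by_contra hne
        have K1 := Kx y h1 (fun h => hne h.symm)
        have K2 := Ky x h2 hne
        rcases Dx with ⟨hsx, htbx⟩ | ⟨hsx, htbx⟩ <;>
          rcases Dy with ⟨hsy, htby⟩ | ⟨hsy, htby⟩ <;>
          rcases K1 with h | ⟨h, htb1⟩ <;>
          rcases K2 with h' | ⟨h', htb2⟩ <;>
          first
            | omega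
            | exact absurd htb2 (lt_asymm htb1)
            | exact absurd htby (lt_asymm (lt_trans htb1 htbx))
            | exact absurd htbx (lt_asymm (lt_trans htb2 htby))
  subst hxy
  constructor
  · intro c
    constructor
    · intro h
      have : c = x := hV i (by rw [h, hix])
      rw [this, hjy]
    · intro h
      have : c = x := hV j (by rw [h, hjy])
      rw [this, hix]
  · intro c
    constructor
    · intro h
      have : c = w := hV i (by rw [h, hiw])
      rw [this, hjw]
    · intro h
      have : c = w := hV j (by rw [h, hjw])
      rw [this, hiw]
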